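/- If μ₁, ..., μₙ ∈ [0,1] with n ≥ 2, μₙ < 1/n and μ₁ > 1/n, then (1 − μₙ)² + Σ_{i=1}^{n−1} μᵢ² > Σ_{i=1}^{n} (1/n − μᵢ)². -/

import Mathlib

open Finset

/-- Key inequality of the diversity–fairness trade-off: if `μ₁,…,μₙ ∈ [0,1]`,
`n ≥ 2`, `μₙ < 1/n` and `μ₁ > 1/n`, then the squared Euclidean distance from
`(μ₁,…,μₙ)` to `(0,…,0,1)` exceeds that to the uniform vector `(1/n,…,1/n)`. -/
theorem explore_concentrated_gt_uniform
    (n : ℕ) (hn : 2 ≤ n) (μ : ℕ → ℝ)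
    (hrange : ∀ i ∈ Icc 1 n, μ i ∈ Set.Icc (0 : ℝ) 1)
    (hlast : μ n < 1 / n) (hfirst : μ 1 > 1 / n) :
    (1 - μ n) ^ 2 + ∑ i ∈ Icc 1 (n - 1), (μ i) ^ 2
      > ∑ i ∈ Icc 1 n, (1 / n - μ i) ^ 2 := by
  obtain ⟨m, rfl⟩ : ∃ m, n = m + 1 := ⟨n - 1, by omega⟩
  have hm : 1 ≤ m := by omega
  set c : ℝ := 1 / (m + 1 : ℕ) with hc
  have hn0 : (0:ℝ) < (m + 1 : ℕ) := by positivity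
  have hcn : c * (m + 1 : ℕ) = 1 := by
    rw [hc, one_div, inv_mul_cancel₀ hn0.ne']
  have hc0 : 0 < c := by positivity
  -- split off the top term
  rw [Finset.sum_Icc_succ_top (by omega : 1 ≤ m + 1)]
  simp only [Nat.add_sub_cancel]
  -- expand the remaining sum
  have hexp : ∑ i ∈ Icc 1 m, (c - μ i) ^ 2
      = ∑ i ∈ Icc 1 m, (μ i) ^ 2 + (m : ℝ) * c ^ 2
        - 2 * c * ∑ i ∈ Icc 1 m, μ i := by
    have : ∀ i ∈ Icc 1 m, (c - μ i) ^ 2 = (μ i) ^ 2 + c ^ 2 - 2 * c * μ i := by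
      intro i _; ring
    rw [Finset.sum_congr rfl this, Finset.sum_sub_distrib, Finset.sum_add_distrib,
      Finset.sum_const, ← Finset.mul_sum, Nat.card_Icc]
    simp
  have hsum : μ 1 ≤ ∑ i ∈ Icc 1 m, μ i := by
    apply Finset.single_le_sum (f := μ)
    · intro i hi
      have := hrange i (by simp at hi ⊢; omega)
      exact this.1
    · simp [hm]
  have hμn0 : 0 ≤ μ (m + 1) := (hrange (m + 1) (by simp)).1
  have hμ1 : μ 1 ≤ 1 := (hrange 1 (by simp)).2
  have hmn : (m : ℝ) = (m + 1 : ℕ) - 1 := by push_cast; ring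
  have h2 : (2 : ℝ) ≤ (m + 1 : ℕ) := by exact_mod_cast hn
  have hc2 : c ≤ 1/2 := by
    rw [hc]
    rw [div_le_div_iff₀ hn0 (by norm_num)]
    linarith
  have hmc1 : (m : ℝ) * c = 1 - c := by
    push_cast at hcn ⊢
    linarith
  have hmc : (m : ℝ) * c ^ 2 = c - c ^ 2 := by
    calc (m : ℝ) * c ^ 2 = ((m : ℝ) * c) * c := by ring
    _ = (1 - c) * c := by rw [hmc1]
    _ = c - c ^ 2 := by ring
  rw [hexp]
  nlinarith [mul_pos (by nlinarith : (0:ℝ) < 1 - c) (by linarith : (0:ℝ) < c - μ (m+1)),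
    mul_pos hc0 (by linarith : (0:ℝ) < (∑ i ∈ Icc 1 m, μ i) - c),
    sq_nonneg (1 - 2*c), hc0, hmc]
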